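/- Let Z₁,…,Z₅ ∈ ℝ⁴ have all ordered 4×4 minors positive (⟨Z_iZ_jZ_kZ_l⟩ > 0 for i<j<k<l), and let A ∈ ℝ⁴ satisfy ⟨A Z₁Z₂Z₃⟩ > 0 and ⟨A Z₁Z₃Z₄⟩ < 0. Then ⟨A Z₁Z₃Z₅⟩ < 0. -/

import Mathlib

noncomputable def det4 (x y z w : Fin 4 → ℝ) : ℝ := Matrix.det (Matrix.of ![x, y, z, w])

lemma det4_expand (x y z w : Fin 4 → ℝ) : det4 x y z w =
    x 0 * (y 1 * (z 2 * w 3 - z 3 * w 2) - y 2 * (z 1 * w 3 - z 3 * w 1)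
      + y 3 * (z 1 * w 2 - z 2 * w 1))
  - x 1 * (y 0 * (z 2 * w 3 - z 3 * w 2) - y 2 * (z 0 * w 3 - z 3 * w 0)
      + y 3 * (z 0 * w 2 - z 2 * w 0))
  + x 2 * (y 0 * (z 1 * w 3 - z 3 * w 1) - y 1 * (z 0 * w 3 - z 3 * w 0)
      + y 3 * (z 0 * w 1 - z 1 * w 0))
  - x 3 * (y 0 * (z 1 * w 2 - z 2 * w 1) - y 1 * (z 0 * w 2 - z 2 * w 0)
      + y 2 * (z 0 * w 1 - z 1 * w 0)) := by
  rw [det4, show (Matrix.of ![x, y, z, w]) = Matrix.of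
      ![![x 0, x 1, x 2, x 3], ![y 0, y 1, y 2, y 3],
        ![z 0, z 1, z 2, z 3], ![w 0, w 1, w 2, w 3]] from by
    ext i j; fin_cases i <;> fin_cases j <;> rfl]
  simp [Matrix.det_succ_row_zero, Fin.sum_univ_succ, Fin.succAbove,
    Fin.castSucc, Fin.castAdd, Fin.castLE]
  ring

lemma plucker (a b c d e f : Fin 4 → ℝ) :
    det4 a b c d * det4 a b e f - det4 a b c e * det4 a b d f
      + det4 a b c f * det4 a b d e = 0 := by
  simp only [det4_expand]; ring

lemma det4_rot (a x y z : Fin 4 → ℝ) : det4 x y a z = det4 a x y z := by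
  simp only [det4_expand]; ring

lemma det4_swap34 (a x y z : Fin 4 → ℝ) : det4 a x z y = - det4 a x y z := by
  simp only [det4_expand]; ring

theorem projected_positivity_obstruction (Z : Fin 5 → Fin 4 → ℝ) (A : Fin 4 → ℝ)
    (hpos : ∀ i j k l : Fin 5, i < j → j < k → k < l →
      0 < det4 (Z i) (Z j) (Z k) (Z l))
    (h1 : 0 < det4 A (Z 0) (Z 1) (Z 2))
    (h2 : det4 A (Z 0) (Z 2) (Z 3) < 0) :
    det4 A (Z 0) (Z 2) (Z 4) < 0 := by
  have hp := plucker (Z 0) (Z 2) A (Z 3) (Z 4) (Z 1)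
  have e1 : det4 (Z 0) (Z 2) A (Z 3) = det4 A (Z 0) (Z 2) (Z 3) := det4_rot ..
  have e2 : det4 (Z 0) (Z 2) A (Z 4) = det4 A (Z 0) (Z 2) (Z 4) := det4_rot ..
  have e3 : det4 (Z 0) (Z 2) A (Z 1) = - det4 A (Z 0) (Z 1) (Z 2) := by
    rw [det4_rot]; exact det4_swap34 ..
  have p1 : 0 < det4 (Z 0) (Z 2) (Z 4) (Z 1) := by
    have h := hpos 0 1 2 4 (by decide) (by decide) (by decide)
    have e : det4 (Z 0) (Z 2) (Z 4) (Z 1) = det4 (Z 0) (Z 1) (Z 2) (Z 4) := by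
      simp only [det4_expand]; ring
    linarith
  have p2 : 0 < det4 (Z 0) (Z 2) (Z 3) (Z 1) := by
    have h := hpos 0 1 2 3 (by decide) (by decide) (by decide)
    have e : det4 (Z 0) (Z 2) (Z 3) (Z 1) = det4 (Z 0) (Z 1) (Z 2) (Z 3) := by
      simp only [det4_expand]; ring
    linarith
  have p3 : 0 < det4 (Z 0) (Z 2) (Z 3) (Z 4) := hpos 0 2 3 4 (by decide) (by decide) (by decide)
  rw [e1, e2, e3] at hp
  nlinarith [mul_pos h1 p3, mul_pos p1 (neg_pos.mpr h2)]
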